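/- For positive integers k and m, sg(K_{⟨k^m⟩}) ≥ ⌈2km/(k+1)⌉, where K_{⟨k^m⟩} is the complete multipartite graph with m parts each of size k. -/

import Mathlib

/-- A selection of fixed geodesics between pairs of vertices of `S`:
each element of `P` is a walk whose endpoints lie in `S`, which is a shortest path,
with at most one walk per ordered pair of endpoints, and with the walks chosen for
the two orderings of a pair being reverses of each other. -/
def IsGeodesicSelection {V : Type*} (G : SimpleGraph V) (S : Set V)
    (P : Set ((u : V) × (v : V) × G.Walk u v)) : Prop :=
  (∀ q ∈ P, q.1 ∈ S ∧ q.2.1 ∈ S ∧ q.2.2.IsPath ∧ q.2.2.length = G.dist q.1 q.2.1) ∧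
  (∀ q ∈ P, ∀ q' ∈ P,
    (q.1 = q'.1 ∧ q.2.1 = q'.2.1 → q = q') ∧
    (q.1 = q'.2.1 ∧ q.2.1 = q'.1 → q.2.2.support = q'.2.2.support.reverse))

/-- `S` is a strong geodetic set of `G` if one can fix one shortest path between
each pair of vertices of `S` so that all vertices of `G` are covered. -/
def IsStrongGeodeticSet {V : Type*} (G : SimpleGraph V) (S : Set V) : Prop :=
  ∃ P, IsGeodesicSelection G S P ∧ ∀ w : V, ∃ q ∈ P, w ∈ q.2.2.support

/-- The strong geodetic number: minimum size of a strong geodetic set. -/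
noncomputable def strongGeodeticNumber {V : Type*} (G : SimpleGraph V) : ℕ :=
  sInf {k | ∃ S : Set V, S.ncard = k ∧ IsStrongGeodeticSet G S}

open SimpleGraph Finset


private abbrev Gkm (k m : ℕ) : SimpleGraph ((_ : Fin m) × Fin k) :=
  completeMultipartiteGraph (fun _ : Fin m => Fin k)

private lemma gkm_adj {k m : ℕ} {u v : (_ : Fin m) × Fin k} :
    (Gkm k m).Adj u v ↔ u.1 ≠ v.1 := Iff.rfl

private lemma walk_structure {k m : ℕ} {u v w : (_ : Fin m) × Fin k}
    (p : (Gkm k m).Walk u v)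
    (hd : p.length = (Gkm k m).dist u v)
    (hw : w ∈ p.support) (hwu : w ≠ u) (hwv : w ≠ v) :
    u.1 = v.1 ∧ u ≠ v ∧ p.support = [u, w, v] := by
  cases p with
  | nil => simp at hw; exact absurd hw hwu
  | @cons _ b _ h p' =>
    cases p' with
    | nil =>
      simp only [Walk.support_cons, Walk.support_nil, List.mem_cons, List.mem_singleton,
        List.not_mem_nil, or_false] at hw
      rcases hw with h1 | h1 <;> [exact absurd h1 hwu; exact absurd h1 hwv]
    | @cons _ c _ h' p'' =>
      have huv : u ≠ v := by
        rintro rfl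
        rw [SimpleGraph.dist_self] at hd
        simp [Walk.length_cons] at hd
      have hna : ¬ (Gkm k m).Adj u v := by
        intro ha
        have h1 : (Gkm k m).dist u v ≤ 1 := by
          have := SimpleGraph.dist_le (Walk.cons ha Walk.nil)
          simpa using this
        rw [← hd] at h1
        simp [Walk.length_cons] at h1
      have hsame : u.1 = v.1 := by
        by_contra hne
        exact hna hne
      have hb : b.1 ≠ u.1 := (h.symm : (Gkm k m).Adj b u)
      have hbv : (Gkm k m).Adj b v := by
        rw [gkm_adj, ← hsame]; exact hb
      have hd2 : (Gkm k m).dist u v ≤ 2 := by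
        have := SimpleGraph.dist_le (Walk.cons h (Walk.cons hbv Walk.nil))
        simpa using this
      rw [← hd] at hd2
      cases p'' with
      | nil =>
        simp only [Walk.support_cons, Walk.support_nil, List.mem_cons,
          List.not_mem_nil, or_false] at hw
        have hwb : w = b := by
          rcases hw with h1 | h1 | h1
          · exact absurd h1 hwu
          · exact h1
          · exact absurd h1 hwv
        subst hwb
        exact ⟨hsame, huv, rfl⟩
      | cons h'' p''' => simp [Walk.length_cons] at hd2


private lemma part_card {k m : ℕ} (u : (_ : Fin m) × Fin k) :
    (Finset.univ.filter (fun v : (_ : Fin m) × Fin k => v.1 = u.1 ∧ v ≠ u)).card ≤ k - 1 := by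
  classical
  have : (Finset.univ.filter (fun v : (_ : Fin m) × Fin k => v.1 = u.1 ∧ v ≠ u)).card
      ≤ (Finset.univ.erase u.2).card := by
    apply Finset.card_le_card_of_injOn (fun v => v.2)
    · intro v hv
      simp only [Finset.coe_filter, Set.mem_setOf_eq, Finset.mem_univ, true_and] at hv
      obtain ⟨h1, h2⟩ := hv
      refine Finset.mem_coe.2 <| Finset.mem_erase.2 ⟨?_, Finset.mem_univ _⟩
      intro he
      exact h2 (Sigma.ext h1 (heq_of_eq he))
    · intro a ha b hb hab
      simp only [Finset.coe_filter, Set.mem_setOf_eq, Finset.mem_univ, true_and] at ha hb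
      exact Sigma.ext (ha.1.trans hb.1.symm) (heq_of_eq hab)
  simpa [Finset.card_erase_of_mem] using this

private lemma key_count {k m : ℕ} (hk : 0 < k) (S : Set ((_ : Fin m) × Fin k))
    (hS : IsStrongGeodeticSet (Gkm k m) S) :
    2 * k * m ≤ S.ncard * (k + 1) := by
  classical
  obtain ⟨P, ⟨hP1, hP2⟩, hcov⟩ := hS
  have hex : ∀ w : (_ : Fin m) × Fin k, ∃ q : ((u : _) × (v : _) × (Gkm k m).Walk u v),
      w ∉ S → q ∈ P ∧ q.1.1 = q.2.1.1 ∧ q.1 ≠ q.2.1 ∧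
        q.2.2.support = [q.1, w, q.2.1] := by
    intro w
    by_cases hw : w ∈ S
    · exact ⟨⟨w, w, Walk.nil⟩, fun h => absurd hw h⟩
    · obtain ⟨q, hqP, hqw⟩ := hcov w
      obtain ⟨hu, hv, _hpath, hlen⟩ := hP1 q hqP
      have hwu : w ≠ q.1 := fun e => hw (e ▸ hu)
      have hwv : w ≠ q.2.1 := fun e => hw (e ▸ hv)
      obtain ⟨h1, h2, h3⟩ := walk_structure q.2.2 hlen hqw hwu hwv
      exact ⟨q, fun _ => ⟨hqP, h1, h2, h3⟩⟩
  choose Q hQ using hex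
  set f : ((_ : Fin m) × Fin k) → _ := fun w => ((Q w).1, (Q w).2.1) with hf
  -- key injectivity facts
  have hinj : ∀ w ∉ S, ∀ w' ∉ S, f w = f w' → w = w' := by
    intro w hw w' hw' he
    obtain ⟨hqP, h1, h2, h3⟩ := hQ w hw
    obtain ⟨hqP', h1', h2', h3'⟩ := hQ w' hw'
    have := (hP2 _ hqP _ hqP').1 ⟨congrArg Prod.fst he, congrArg Prod.snd he⟩
    rw [this, h3'] at h3
    simp only [List.cons.injEq] at h3
    exact h3.2.1.symm
  have hanti : ∀ w ∉ S, ∀ w' ∉ S, f w ≠ Prod.swap (f w') := by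
    intro w hw w' hw' he
    obtain ⟨hqP, h1, h2, h3⟩ := hQ w hw
    obtain ⟨hqP', h1', h2', h3'⟩ := hQ w' hw'
    have he1 : (Q w).1 = (Q w').2.1 := congrArg Prod.fst he
    have he2 : (Q w).2.1 = (Q w').1 := congrArg Prod.snd he
    have hrev := (hP2 _ hqP _ hqP').2 ⟨he1, he2⟩
    rw [h3, h3'] at hrev
    simp only [List.reverse_cons, List.reverse_nil, List.nil_append, List.cons_append,
      List.singleton_append] at hrev
    simp only [List.cons.injEq] at hrev
    -- from hrev : q.1 = q'.2.1, w = w', q.2.1 = q'.1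
    have hww : w = w' := hrev.2.1
    subst hww
    exact h2 he1
  -- Finset counting
  let Sfin : Finset _ := S.toFinset
  let T : Finset _ := Sfinᶜ
  have hTS : ∀ w ∈ T, w ∉ S := by
    intro w hw
    simpa [T, Sfin] using hw
  let D : Finset (_ × _) := Sfin.biUnion (fun u =>
    (Finset.univ.filter (fun v => v.1 = u.1 ∧ v ≠ u)).image (fun v => (u, v)))
  have hfD : ∀ w ∈ T, f w ∈ D := by
    intro w hw
    obtain ⟨hqP, h1, h2, h3⟩ := hQ w (hTS w hw)
    have hv : (Q w).1 ∈ S := (hP1 _ hqP).1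
    refine Finset.mem_biUnion.2 ⟨(Q w).1, by simpa [Sfin] using hv, ?_⟩
    refine Finset.mem_image.2 ⟨(Q w).2.1, ?_, rfl⟩
    simp only [Finset.mem_filter, Finset.mem_univ, true_and]
    exact ⟨h1.symm, Ne.symm h2⟩
  have hgD : ∀ w ∈ T, Prod.swap (f w) ∈ D := by
    intro w hw
    obtain ⟨hqP, h1, h2, h3⟩ := hQ w (hTS w hw)
    have hv : (Q w).2.1 ∈ S := (hP1 _ hqP).2.1
    refine Finset.mem_biUnion.2 ⟨(Q w).2.1, by simpa [Sfin] using hv, ?_⟩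
    refine Finset.mem_image.2 ⟨(Q w).1, ?_, rfl⟩
    simp only [Finset.mem_filter, Finset.mem_univ, true_and]
    exact ⟨h1, h2⟩
  let A := T.image f
  let B := T.image (Prod.swap ∘ f)
  have hA : A.card = T.card := Finset.card_image_of_injOn
    (fun a ha b hb he => hinj a (hTS a ha) b (hTS b hb) he)
  have hB : B.card = T.card := Finset.card_image_of_injOn
    (fun a ha b hb he => hinj a (hTS a ha) b (hTS b hb) (Prod.swap_injective he))
  have hdisj : Disjoint A B := by
    rw [Finset.disjoint_left]
    rintro a ha hb
    obtain ⟨w, hw, rfl⟩ := Finset.mem_image.1 ha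
    obtain ⟨w', hw', he⟩ := Finset.mem_image.1 hb
    exact hanti w (hTS w hw) w' (hTS w' hw') he.symm
  have hsub : A ∪ B ⊆ D := by
    intro a ha
    rcases Finset.mem_union.1 ha with h | h
    · obtain ⟨w, hw, rfl⟩ := Finset.mem_image.1 h; exact hfD w hw
    · obtain ⟨w, hw, rfl⟩ := Finset.mem_image.1 h; exact hgD w hw
  have hcard1 : 2 * T.card ≤ D.card := by
    have hle := Finset.card_le_card hsub
    rw [Finset.card_union_of_disjoint hdisj, hA, hB] at hle
    omega
  have hcard2 : D.card ≤ Sfin.card * (k - 1) := by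
    calc D.card ≤ ∑ u ∈ Sfin,
        ((Finset.univ.filter (fun v => v.1 = u.1 ∧ v ≠ u)).image (fun v => (u, v))).card :=
          Finset.card_biUnion_le
      _ ≤ ∑ _u ∈ Sfin, (k-1) :=
          Finset.sum_le_sum (fun u _ => le_trans Finset.card_image_le (part_card u))
      _ = Sfin.card * (k-1) := by rw [Finset.sum_const, smul_eq_mul]
  have hVcard : Fintype.card ((_ : Fin m) × Fin k) = m * k := by
    simp [Fintype.card_sigma]
  have hTcard : T.card = m * k - Sfin.card := by
    rw [Finset.card_compl, hVcard]
  have hsle : Sfin.card ≤ m * k := by rw [← hVcard]; exact Finset.card_le_univ _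
  have hncard : S.ncard = Sfin.card := Set.ncard_eq_toFinset_card' S
  rw [hncard]
  obtain ⟨k', rfl⟩ : ∃ k', k = k' + 1 := ⟨k - 1, by omega⟩
  rw [hTcard] at hcard1
  have h1 := le_trans hcard1 hcard2
  simp only [Nat.add_sub_cancel] at h1
  zify [hsle] at h1
  zify
  nlinarith [h1, hsle]


theorem sg_balanced_multipartite_lower (k m : ℕ) (hk : 0 < k) (hm : 0 < m) :
    ⌈(2 * k * m : ℚ) / (k + 1)⌉ ≤
      (strongGeodeticNumber (SimpleGraph.completeMultipartiteGraph (fun _ : Fin m => Fin k)) : ℤ) := by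
  classical
  have hne : {n | ∃ S : Set ((_ : Fin m) × Fin k), S.ncard = n ∧
      IsStrongGeodeticSet (Gkm k m) S}.Nonempty := by
    refine ⟨(Set.univ : Set ((_ : Fin m) × Fin k)).ncard, Set.univ, rfl, ?_⟩
    refine ⟨Set.range (fun u => ⟨u, u, SimpleGraph.Walk.nil⟩), ⟨?_, ?_⟩, ?_⟩
    · rintro q ⟨u, rfl⟩
      exact ⟨trivial, trivial, SimpleGraph.Walk.IsPath.nil, by simp [SimpleGraph.dist_self]⟩
    · rintro q ⟨u, rfl⟩ q' ⟨u', rfl⟩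
      constructor
      · rintro ⟨h1, -⟩
        simp only at h1
        subst h1
        rfl
      · rintro ⟨h1, -⟩
        simp only at h1
        subst h1
        rfl
    · intro w
      exact ⟨⟨w, w, SimpleGraph.Walk.nil⟩, ⟨w, rfl⟩, by simp⟩
  have hmem := Nat.sInf_mem hne
  obtain ⟨S, hScard, hSgeo⟩ := hmem
  have hkey := key_count hk S hSgeo
  rw [hScard] at hkey
  have hsg : strongGeodeticNumber
      (SimpleGraph.completeMultipartiteGraph (fun _ : Fin m => Fin k)) =
      sInf {n | ∃ S : Set ((_ : Fin m) × Fin k), S.ncard = n ∧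
        IsStrongGeodeticSet (Gkm k m) S} := rfl
  rw [hsg, Int.ceil_le, div_le_iff₀ (by positivity)]
  exact_mod_cast hkey
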